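/- Let F be a field, p a monic irreducible and separable polynomial of degree n over F, and C its companion matrix. Let X and Y be n×n matrices over F commuting with C and let T ∈ M_n(F) be arbitrary. Then X + CT = TC + Y holds if and only if X = Y and T commutes with C. -/

import Mathlib

open Matrix Polynomial

/-- The companion matrix of a monic polynomial `p` of degree `n`:
ones on the first subdiagonal, `-(coefficients of p)` in the last column. -/
def companionMat (F : Type*) [Field F] (n : ℕ) (p : Polynomial F) :
    Matrix (Fin n) (Fin n) F :=
  Matrix.of fun i j =>
    if (j : ℕ) = n - 1 then -p.coeff (i : ℕ)
    else if (i : ℕ) = (j : ℕ) + 1 then 1 else 0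

/-- for `p` monic irreducible separable with companion matrix `C`,
`X, Y ∈ Z(C)` and `T` arbitrary, `X + CT = TC + Y` iff `X = Y` and `T ∈ Z(C)`. -/
theorem key_matrix_equation_separable
    {F : Type*} [Field F] {n : ℕ}
    (p : Polynomial F) (hmonic : p.Monic) (hirr : Irreducible p)
    (hsep : p.Separable) (hdeg : p.natDegree = n)
    (X Y T : Matrix (Fin n) (Fin n) F)
    (hX : X * companionMat F n p = companionMat F n p * X)
    (hY : Y * companionMat F n p = companionMat F n p * Y) :
    X + companionMat F n p * T = T * companionMat F n p + Y ↔
      (X = Y ∧ T * companionMat F n p = companionMat F n p * T) := by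
  haveI : Fact (Irreducible p) := ⟨hirr⟩
  have hp0 : p ≠ 0 := hmonic.ne_zero
  have hn : 0 < n := hdeg ▸ hirr.natDegree_pos
  have hdim : (AdjoinRoot.powerBasis hp0).dim = n := by
    rw [AdjoinRoot.powerBasis_dim]; exact hdeg
  set K := AdjoinRoot p with hK
  let b : Module.Basis (Fin n) F K := (AdjoinRoot.powerBasis hp0).basis.reindex (finCongr hdim)
  have hb : ∀ j : Fin n, b j = AdjoinRoot.root p ^ (j : ℕ) := by
    intro j
    rw [Module.Basis.reindex_apply, PowerBasis.basis_eq_pow, AdjoinRoot.powerBasis_gen]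
    rfl
  -- expansion of root ^ n in the power basis
  have hrootN : ∀ i : Fin n, b.repr (AdjoinRoot.root p ^ n) i = -(p.coeff (i : ℕ)) := by
    have hsum : AdjoinRoot.root p ^ n =
        ∑ i : Fin n, (-(p.coeff (i : ℕ))) • b i := by
      have h1 : (aeval (AdjoinRoot.root p))
          ((Polynomial.X : F[X]) ^ p.natDegree +
            ∑ i ∈ Finset.range p.natDegree, C (p.coeff i) * (Polynomial.X : F[X]) ^ i) = 0 := by
        rw [← hmonic.as_sum, AdjoinRoot.aeval_eq, AdjoinRoot.mk_self]
      rw [hdeg] at h1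
      rw [map_add, map_pow, aeval_X, map_sum] at h1
      have h2 : ∀ i ∈ Finset.range n,
          (aeval (AdjoinRoot.root p)) (C (p.coeff i) * (Polynomial.X : F[X]) ^ i) =
            (p.coeff i) • AdjoinRoot.root p ^ i := by
        intro i _
        rw [_root_.map_mul, map_pow, aeval_X, aeval_C, Algebra.smul_def]
      rw [Finset.sum_congr rfl h2] at h1
      have h3 : AdjoinRoot.root p ^ n =
          ∑ i ∈ Finset.range n, -((p.coeff i) • AdjoinRoot.root p ^ i) := by
        rw [Finset.sum_neg_distrib, eq_neg_iff_add_eq_zero]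
        exact h1
      rw [h3, ← Fin.sum_univ_eq_sum_range (fun i => -((p.coeff i) • AdjoinRoot.root p ^ i)) n]
      apply Finset.sum_congr rfl
      intro i _
      rw [hb i, neg_smul]
    intro i
    rw [hsum, b.repr_sum_self]
  -- companion matrix = left multiplication matrix of the root
  have hC : companionMat F n p = Algebra.leftMulMatrix b (AdjoinRoot.root p) := by
    ext i j
    rw [Algebra.leftMulMatrix_eq_repr_mul, hb j, ← pow_succ']
    by_cases hj : (j : ℕ) = n - 1
    · have hj1 : (j : ℕ) + 1 = n := by omega
      rw [hj1, hrootN i]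
      simp [companionMat, hj]
    · have hlt : (j : ℕ) + 1 < n := by have := j.isLt; omega
      have heq : AdjoinRoot.root p ^ ((j : ℕ) + 1) = b ⟨(j : ℕ) + 1, hlt⟩ :=
        (hb ⟨(j : ℕ) + 1, hlt⟩).symm
      rw [heq, b.repr_self]
      simp only [companionMat, Matrix.of_apply, hj, if_false, Finsupp.single_apply]
      by_cases hij : (i : ℕ) = (j : ℕ) + 1
      · have : (⟨(j : ℕ) + 1, hlt⟩ : Fin n) = i := by
          apply Fin.ext; simp [hij]
        simp [this, hij]
      · have : (⟨(j : ℕ) + 1, hlt⟩ : Fin n) ≠ i := by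
          intro hcon; apply hij; rw [← hcon]
        simp [this, hij]
  constructor
  · intro h
    have hD : X - Y = T * companionMat F n p - companionMat F n p * T := by
      rw [sub_eq_sub_iff_add_eq_add]; exact h
    have hDC : (X - Y) * companionMat F n p = companionMat F n p * (X - Y) := by
      rw [sub_mul, mul_sub, hX, hY]
    set f := Matrix.toLin b b (X - Y) with hf
    have hCmLin : Matrix.toLin b b (companionMat F n p) =
        Algebra.lmul F K (AdjoinRoot.root p) := by
      rw [hC, Algebra.leftMulMatrix_apply, Matrix.toLin_toMatrix]
    have hcomm : ∀ w : K, f (AdjoinRoot.root p * w) = AdjoinRoot.root p * f w := by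
      intro w
      have h1 := congrArg (Matrix.toLin b b) hDC
      rw [Matrix.toLin_mul b b b, Matrix.toLin_mul b b b, hCmLin] at h1
      have h2 := DFunLike.congr_fun h1 w
      simp only [LinearMap.comp_apply, Algebra.coe_lmul_eq_mul, LinearMap.mul_apply'] at h2
      exact h2
    have hpow : ∀ m : ℕ, ∀ w : K, f (AdjoinRoot.root p ^ m * w) =
        AdjoinRoot.root p ^ m * f w := by
      intro m
      induction m with
      | zero => simp
      | succ m ih =>
        intro w
        rw [pow_succ', mul_assoc, hcomm, ih, mul_assoc]
    have hfz : ∀ z : K, f z = z * f 1 := by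
      intro z
      obtain ⟨r, rfl⟩ := AdjoinRoot.mk_surjective z
      rw [← AdjoinRoot.aeval_eq]
      induction r using Polynomial.induction_on' with
      | add a c ha hc => rw [map_add, map_add, ha, hc, add_mul]
      | monomial k c =>
        rw [aeval_monomial]
        have hk := hpow k 1
        rw [mul_one] at hk
        calc f (algebraMap F K c * AdjoinRoot.root p ^ k)
            = algebraMap F K c * f (AdjoinRoot.root p ^ k) := by
              rw [← Algebra.smul_def, _root_.map_smul, Algebra.smul_def]
          _ = algebraMap F K c * (AdjoinRoot.root p ^ k * f 1) := by rw [hk]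
          _ = algebraMap F K c * AdjoinRoot.root p ^ k * f 1 := by rw [mul_assoc]
    have hd : X - Y = Algebra.leftMulMatrix b (f 1) := by
      have hfl : f = Algebra.lmul F K (f 1) := by
        apply LinearMap.ext
        intro z
        rw [hfz z]
        simp [mul_comm, LinearMap.mul_apply']
      rw [Algebra.leftMulMatrix_apply, ← hfl, hf, LinearMap.toMatrix_toLin]
    -- separability instances
    haveI : FiniteDimensional F K := Module.Finite.of_basis b
    have hmin : minpoly F (AdjoinRoot.root p) = p := by
      rw [AdjoinRoot.minpoly_root hp0, hmonic.leadingCoeff, inv_one, Polynomial.C_1, mul_one]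
    have hsepel : IsSeparable F (AdjoinRoot.root p) := by
      show (minpoly F (AdjoinRoot.root p)).Separable
      rw [hmin]; exact hsep
    haveI : Algebra.IsSeparable F K := by
      have htop : IntermediateField.adjoin F {AdjoinRoot.root p} = (⊤ : IntermediateField F K) := by
        rw [eq_top_iff]
        intro x _
        have hx : x ∈ Algebra.adjoin F ({AdjoinRoot.root p} : Set K) := by
          rw [AdjoinRoot.adjoinRoot_eq_top]; trivial
        exact IntermediateField.algebra_adjoin_le_adjoin F _ hx
      haveI h1 : Algebra.IsSeparable F (IntermediateField.adjoin F {AdjoinRoot.root p}) :=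
        (IntermediateField.isSeparable_adjoin_simple_iff_isSeparable F K).2 hsepel
      exact Algebra.IsSeparable.of_algHom F _
        (((IntermediateField.equivOfEq htop).trans IntermediateField.topEquiv).symm.toAlgHom)
    -- trace vanishing
    have htr : ∀ z : K, Algebra.traceForm F K (f 1) z = 0 := by
      intro z
      rw [Algebra.traceForm_apply, Algebra.trace_eq_matrix_trace b, _root_.map_mul, ← hd]
      set E := Algebra.leftMulMatrix b z with hE
      have hEC : E * companionMat F n p = companionMat F n p * E := by
        rw [hC, hE, ← _root_.map_mul, ← _root_.map_mul, mul_comm]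
      rw [hD, sub_mul, Matrix.trace_sub]
      have h1 : Matrix.trace (T * companionMat F n p * E) =
          Matrix.trace (T * E * companionMat F n p) := by
        rw [mul_assoc, ← hEC, ← mul_assoc]
      have h2 : Matrix.trace (companionMat F n p * T * E) =
          Matrix.trace (T * E * companionMat F n p) := by
        rw [mul_assoc, Matrix.trace_mul_comm]
      rw [h1, h2, sub_self]
    have hd0 : f 1 = 0 := (traceForm_nondegenerate F K).1 _ htr
    have hXY : X - Y = 0 := by rw [hd, hd0, map_zero]
    refine ⟨sub_eq_zero.mp hXY, ?_⟩
    have h3 : T * companionMat F n p - companionMat F n p * T = 0 := by rw [← hD, hXY]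
    exact sub_eq_zero.mp h3
  · rintro ⟨rfl, hT⟩
    rw [hT, add_comm]
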